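/- arXiv:1511.07028 — 2 statements merged into one kernel-verified Lean document; each statement's English description precedes it below -/
import Mathlib

section
/- For every q with 2 < q < 3 there exists a constant c > 0 such that |(a+b)^q - a^q - b^q - q a^{q-1} b - q a b^{q-1}| ≤ c (a^2 b^{q-2} + a^{q-2} b^2) for all a, b > 0. -/
/-- Normalized version: the estimate for `a = 1`, `b = t ∈ (0,1]`. -/
lemma stmt_4_norm (q : ℝ) (hq : 2 < q) (hq' : q < 3) (t : ℝ) (ht : 0 < t) (ht1 : t ≤ 1) :
    |(1 + t) ^ q - 1 - t ^ q - q * t - q * t ^ (q - 1)| ≤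
      4 * q * (t ^ (q - 2) + t ^ 2) := by
  have h1t : (0:ℝ) < 1 + t := by linarith
  -- Bernoulli lower bound
  have h1 : 1 + q * t ≤ (1 + t) ^ q :=
    one_add_mul_self_le_rpow_one_add (by linarith) (by linarith)
  -- concave Bernoulli for exponent q - 2 ∈ (0,1)
  have h2 : (1 + t) ^ (q - 2) ≤ 1 + (q - 2) * t :=
    rpow_one_add_le_one_add_mul_self (by linarith) (by linarith) (by linarith)
  have h3 : (1 + t) ^ q = (1 + t) ^ (2:ℕ) * (1 + t) ^ (q - 2) := by
    rw [← Real.rpow_natCast (1 + t) 2, ← Real.rpow_add h1t]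
    norm_num
  have h4 : (1 + t) ^ q ≤ 1 + q * t + (3 * q - 5) * t ^ 2 := by
    rw [h3]
    have hsq : (0:ℝ) ≤ (1 + t) ^ (2:ℕ) := by positivity
    have := mul_le_mul_of_nonneg_left h2 hsq
    nlinarith [sq_nonneg t, mul_nonneg (mul_nonneg ht.le ht.le) ht.le,
      mul_le_mul_of_nonneg_left (mul_le_mul_of_nonneg_left ht1 ht.le) ht.le]
  -- bounds on the `b`-side terms
  have htq2 : (0:ℝ) ≤ t ^ (q - 2) := Real.rpow_nonneg ht.le _
  have h5 : t ^ q ≤ t ^ (q - 2) := by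
    have : t ^ q = t ^ (q - 2) * t ^ (2:ℕ) := by
      rw [← Real.rpow_natCast t 2, ← Real.rpow_add ht]
      norm_num
    rw [this]
    have ht2 : t ^ (2:ℕ) ≤ 1 := by nlinarith
    nlinarith
  have h6 : t ^ (q - 1) ≤ t ^ (q - 2) := by
    have : t ^ (q - 1) = t ^ (q - 2) * t := by
      rw [show q - 1 = q - 2 + 1 by ring, Real.rpow_add_one ht.ne']
    rw [this]
    nlinarith
  have htq : (0:ℝ) ≤ t ^ q := Real.rpow_nonneg ht.le _
  have htq1 : (0:ℝ) ≤ t ^ (q - 1) := Real.rpow_nonneg ht.le _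
  rw [abs_le]
  constructor <;> nlinarith [sq_nonneg t]

/-- The key asymmetric estimate for `0 < b ≤ a`. -/
lemma stmt_4_key (q : ℝ) (hq : 2 < q) (hq' : q < 3) (a b : ℝ) (ha : 0 < a) (hb : 0 < b)
    (hba : b ≤ a) :
    |(a + b) ^ q - a ^ q - b ^ q - q * a ^ (q - 1) * b - q * a * b ^ (q - 1)| ≤
      4 * q * (a ^ 2 * b ^ (q - 2) + a ^ (q - 2) * b ^ 2) := by
  set t : ℝ := b / a with htdef
  have ht : 0 < t := div_pos hb ha
  have ht1 : t ≤ 1 := (div_le_one ha).2 hba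
  have hb' : b = a * t := by rw [htdef, mul_div_cancel₀ b ha.ne']
  have haq : (0:ℝ) < a ^ q := Real.rpow_pos_of_pos ha _
  -- homogeneity identities
  have e1 : (a + b) ^ q = a ^ q * (1 + t) ^ q := by
    rw [← Real.mul_rpow ha.le (by linarith), mul_add, mul_one, ← hb']
  have e2 : b ^ q = a ^ q * t ^ q := by
    rw [hb', Real.mul_rpow ha.le ht.le]
  have ea1 : a ^ (q - 1) = a ^ q / a := by
    rw [Real.rpow_sub ha, Real.rpow_one]
  have ea2 : a ^ (q - 2) = a ^ q / a ^ (2:ℕ) := by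
    rw [Real.rpow_sub ha, ← Real.rpow_natCast a 2]
    norm_num
  have e3 : q * a ^ (q - 1) * b = a ^ q * (q * t) := by
    rw [ea1, hb']; field_simp
  have e4 : q * a * b ^ (q - 1) = a ^ q * (q * t ^ (q - 1)) := by
    rw [hb', Real.mul_rpow ha.le ht.le, ea1]; field_simp
  have e5 : a ^ 2 * b ^ (q - 2) = a ^ q * t ^ (q - 2) := by
    rw [hb', Real.mul_rpow ha.le ht.le, ea2]; field_simp
  have e6 : a ^ (q - 2) * b ^ 2 = a ^ q * t ^ 2 := by
    rw [hb', ea2]; field_simp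
  have enorm := stmt_4_norm q hq hq' t ht ht1
  calc |(a + b) ^ q - a ^ q - b ^ q - q * a ^ (q - 1) * b - q * a * b ^ (q - 1)|
      = |a ^ q * ((1 + t) ^ q - 1 - t ^ q - q * t - q * t ^ (q - 1))| := by
        rw [e1, e2, e3, e4]; ring_nf
    _ = a ^ q * |(1 + t) ^ q - 1 - t ^ q - q * t - q * t ^ (q - 1)| := by
        rw [abs_mul, abs_of_pos haq]
    _ ≤ a ^ q * (4 * q * (t ^ (q - 2) + t ^ 2)) := by
        exact mul_le_mul_of_nonneg_left enorm haq.le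
    _ = 4 * q * (a ^ 2 * b ^ (q - 2) + a ^ (q - 2) * b ^ 2) := by
        rw [e5, e6]; ring

/-- For `2 < q < 3` there is `c > 0` with
`|(a+b)^q - a^q - b^q - q a^{q-1} b - q a b^{q-1}| ≤ c (a² b^{q-2} + a^{q-2} b²)`
for all `a, b > 0`. -/
theorem stmt_4 (q : ℝ) (hq : 2 < q) (hq' : q < 3) :
    ∃ c : ℝ, 0 < c ∧ ∀ a b : ℝ, 0 < a → 0 < b →
      |(a + b) ^ q - a ^ q - b ^ q - q * a ^ (q - 1) * b - q * a * b ^ (q - 1)| ≤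
        c * (a ^ 2 * b ^ (q - 2) + a ^ (q - 2) * b ^ 2) := by
  refine ⟨4 * q, by linarith, fun a b ha hb => ?_⟩
  rcases le_total b a with hba | hab
  · exact stmt_4_key q hq hq' a b ha hb hba
  · have h := stmt_4_key q hq hq' b a hb ha hab
    rw [add_comm b a] at h
    have e : (a + b) ^ q - a ^ q - b ^ q - q * a ^ (q - 1) * b - q * a * b ^ (q - 1)
        = (a + b) ^ q - b ^ q - a ^ q - q * b ^ (q - 1) * a - q * b * a ^ (q - 1) := by
      ring
    rw [e]
    calc _ ≤ 4 * q * (b ^ 2 * a ^ (q - 2) + b ^ (q - 2) * a ^ 2) := h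
      _ = 4 * q * (a ^ 2 * b ^ (q - 2) + a ^ (q - 2) * b ^ 2) := by ring
end

section
/- For every real q ≥ 1 there exists a constant c > 0 such that |(a+b)^q - a^q - q a^{q-1} b| ≤ c (b^q + a^{q-2} b^2) for all a, b > 0. -/
lemma aux_pow (m : ℕ) : ∀ t : ℝ, 0 ≤ t → t ≤ 1 →
    (1 + t) ^ m ≤ 1 + m * t + 4 ^ m * t ^ 2 := by
  induction m with
  | zero => intro t ht ht1; simp; positivity
  | succ m ih =>
    intro t ht ht1
    have h1 := ih t ht ht1
    have hm4 : (m : ℝ) ≤ 4 ^ m := by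
      calc (m : ℝ) ≤ 2 ^ m := by exact_mod_cast (Nat.lt_two_pow_self (n := m)).le
        _ ≤ 4 ^ m := by gcongr; norm_num
    have h40 : (0:ℝ) < 4 ^ m := by positivity
    have hp : (0:ℝ) ≤ (1+t)^m := by positivity
    have ht3 : t^3 ≤ t^2 := by nlinarith
    rw [pow_succ, pow_succ]
    push_cast
    nlinarith [mul_le_mul_of_nonneg_right h1 (by linarith : (0:ℝ) ≤ 1+t),
      mul_nonneg h40.le (by nlinarith : (0:ℝ) ≤ t^2 - t^3),
      mul_nonneg (sub_nonneg.mpr hm4) (sq_nonneg t),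
      mul_nonneg h40.le (sq_nonneg t)]

lemma key (q : ℝ) (hq : 1 ≤ q) :
    ∀ t : ℝ, 0 < t → (1+t)^q - 1 - q*t ≤
      ((2:ℝ)^q + (⌊q⌋₊ + 2 * 4 ^ ⌊q⌋₊)) * (t^q + t^2) := by
  intro t ht
  set m : ℕ := ⌊q⌋₊ with hm
  have hq0 : 0 ≤ q := by linarith
  have htq : 0 ≤ t ^ q := Real.rpow_nonneg ht.le q
  have h2q : (0:ℝ) < 2 ^ q := Real.rpow_pos_of_pos (by norm_num) q
  have hm4 : (0:ℝ) < 4 ^ m := by positivity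
  rcases le_or_gt 1 t with h1 | h1
  · -- t ≥ 1 : (1+t)^q ≤ (2t)^q = 2^q t^q
    have hle : (1+t)^q ≤ (2*t)^q := by
      apply Real.rpow_le_rpow (by linarith) (by linarith) hq0
    rw [Real.mul_rpow (by norm_num) ht.le] at hle
    have hq1 : 1 ≤ t ^ q := Real.one_le_rpow h1 hq0
    nlinarith [mul_nonneg (Nat.cast_nonneg m : (0:ℝ) ≤ m) htq, mul_nonneg hm4.le htq,
      mul_nonneg h2q.le (sq_nonneg t), mul_nonneg hq0 ht.le,
      mul_nonneg (Nat.cast_nonneg m : (0:ℝ) ≤ m) (sq_nonneg t), mul_nonneg hm4.le (sq_nonneg t)]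
  · -- t < 1
    have hr0 : (0:ℝ) ≤ q - m := by
      have := Nat.floor_le hq0; linarith
    have hr1 : q - m ≤ 1 := by
      have := Nat.lt_floor_add_one q; push_cast at this ⊢; linarith
    have hsplit : (1+t)^q = (1+t)^(m:ℝ) * (1+t)^(q - m) := by
      rw [← Real.rpow_add (by linarith)]; ring_nf
    have hnat : (1+t)^(m:ℝ) = (1+t)^m := Real.rpow_natCast _ m
    have hber : (1+t)^(q-m) ≤ 1 + (q-m)*t := by
      have := _root_.rpow_one_add_le_one_add_mul_self (s := t) (by linarith) hr0 hr1
      linarith [this]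
    have hpow := aux_pow m t ht.le h1.le
    have hprod : (1+t)^q ≤ (1 + m*t + 4^m*t^2) * (1 + (q-m)*t) := by
      rw [hsplit, hnat]
      apply mul_le_mul hpow hber (Real.rpow_nonneg (by linarith) _)
      nlinarith
    have ht3 : t^3 ≤ t^2 := by nlinarith
    have hmc : (0:ℝ) ≤ (m:ℝ) := Nat.cast_nonneg m
    have f1 : (m:ℝ)*(q-m)*t^2 ≤ m*t^2 := by
      nlinarith [mul_nonneg hmc (sq_nonneg t)]
    have f2 : (4:ℝ)^m*(q-m)*t^3 ≤ 4^m*t^2 := by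
      nlinarith [mul_nonneg hm4.le (by nlinarith : (0:ℝ) ≤ t^2 - t^3),
        mul_nonneg (mul_nonneg hm4.le (by positivity : (0:ℝ) ≤ t^3)) (sub_nonneg.mpr hr1)]
    have f3 : (0:ℝ) ≤ 2^q*t^q := mul_nonneg h2q.le htq
    have f4 : (0:ℝ) ≤ 2^q*t^2 := mul_nonneg h2q.le (sq_nonneg t)
    have f5 : (0:ℝ) ≤ ((m:ℝ)+2*4^m)*t^q := by positivity
    nlinarith [hprod]

/-- For real `q ≥ 1` there is `c > 0` such that
`|(a+b)^q - a^q - q a^{q-1} b| ≤ c (b^q + a^{q-2} b²)` for all `a, b > 0`. -/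
theorem stmt_5 (q : ℝ) (hq : 1 ≤ q) :
    ∃ c : ℝ, 0 < c ∧ ∀ a b : ℝ, 0 < a → 0 < b →
      |(a + b) ^ q - a ^ q - q * a ^ (q - 1) * b| ≤
        c * (b ^ q + a ^ (q - 2) * b ^ 2) := by
  refine ⟨(2:ℝ)^q + (⌊q⌋₊ + 2 * 4 ^ ⌊q⌋₊), by positivity, ?_⟩
  intro a b ha hb
  set t := b / a with htdef
  have ht : 0 < t := div_pos hb ha
  have haq : 0 < a ^ q := Real.rpow_pos_of_pos ha q
  have e1 : (a + b) ^ q = a ^ q * (1 + t) ^ q := by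
    rw [← Real.mul_rpow ha.le (by positivity)]
    congr 1; rw [htdef]; field_simp
  have e2 : q * a ^ (q - 1) * b = a ^ q * (q * t) := by
    rw [Real.rpow_sub_one ha.ne', htdef]; ring
  have e3 : b ^ q = a ^ q * t ^ q := by
    rw [← Real.mul_rpow ha.le ht.le]; congr 1
    rw [htdef, ← mul_div_assoc, mul_div_cancel_left₀ _ ha.ne']
  have e4 : a ^ (q - 2) * b ^ 2 = a ^ q * t ^ 2 := by
    rw [Real.rpow_sub ha]
    have h2 : a ^ (2:ℝ) = a ^ (2:ℕ) := by
      rw [← Real.rpow_natCast]; norm_num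
    rw [h2, htdef, div_pow]
    ring
  have hlow : 0 ≤ (1+t)^q - 1 - q*t := by
    have := one_add_mul_self_le_rpow_one_add (s := t) (by linarith) hq
    linarith
  have hkey := key q hq t ht
  rw [e1, e2, e3, e4,
    show a^q*(1+t)^q - a^q - a^q*(q*t) = a^q * ((1+t)^q - 1 - q*t) by ring,
    abs_of_nonneg (mul_nonneg haq.le hlow)]
  calc a^q * ((1+t)^q - 1 - q*t)
      ≤ a^q * (((2:ℝ)^q + (⌊q⌋₊ + 2 * 4 ^ ⌊q⌋₊))*(t^q+t^2)) :=
        mul_le_mul_of_nonneg_left hkey haq.le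
    _ = ((2:ℝ)^q + (⌊q⌋₊ + 2 * 4 ^ ⌊q⌋₊)) * (a^q*t^q + a^q*t^2) := by ring
end
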